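/- Let Ω₁(x) = x₀x₁ + x₂x₃ + x₄x₅ and Ω₂(x) = x₁x₂ + x₃x₄ + x₅x₆ be quadratic forms on k⁷ with coordinates (x₀,…,x₆), k an algebraically closed field of characteristic ≠ 2. Then every nonzero quadratic form in the pencil λΩ₁ + μΩ₂ has rank exactly 6. -/

import Mathlib

open Matrix

/-- Twice the Gram matrix of the quadratic form `Ω₁(x) = x₀x₁ + x₂x₃ + x₄x₅` on `k⁷`. -/
def gramOmega1 (k : Type*) [Field k] : Matrix (Fin 7) (Fin 7) k :=
  !![0,1,0,0,0,0,0;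
     1,0,0,0,0,0,0;
     0,0,0,1,0,0,0;
     0,0,1,0,0,0,0;
     0,0,0,0,0,1,0;
     0,0,0,0,1,0,0;
     0,0,0,0,0,0,0]

/-- Twice the Gram matrix of the quadratic form `Ω₂(x) = x₁x₂ + x₃x₄ + x₅x₆` on `k⁷`. -/
def gramOmega2 (k : Type*) [Field k] : Matrix (Fin 7) (Fin 7) k :=
  !![0,0,0,0,0,0,0;
     0,0,1,0,0,0,0;
     0,1,0,0,0,0,0;
     0,0,0,0,1,0,0;
     0,0,0,1,0,0,0;
     0,0,0,0,0,0,1;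
     0,0,0,0,0,1,0]

@[simp] lemma cons_val7_5' {α : Type*} (x : α) (u : Fin 6 → α) :
    vecCons x u (5 : Fin 7) = u 4 := rfl
@[simp] lemma cons_val7_6' {α : Type*} (x : α) (u : Fin 6 → α) :
    vecCons x u (6 : Fin 7) = u 5 := rfl
@[simp] lemma cons_val6_5' {α : Type*} (x : α) (u : Fin 5 → α) :
    vecCons x u (5 : Fin 6) = u 4 := rfl
@[simp] lemma vecHead_const' {α : Type*} {n : ℕ} (c : α) :
    vecHead (fun _ : Fin (n+1) => c) = c := rfl
@[simp] lemma vecTail_const' {α : Type*} {n : ℕ} (c : α) :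
    vecTail (fun _ : Fin (n+1) => c) = fun _ => c := rfl

/-- Selecting a (square) set of rows and columns does not increase the rank. -/
lemma rank_submatrix_le' {k : Type*} [Field k] {n N : ℕ}
    (A : Matrix (Fin N) (Fin N) k) (f : Fin n → Fin N) :
    (A.submatrix f f).rank ≤ A.rank := by
  have h1 : A.submatrix f f =
      ((1 : Matrix (Fin N) (Fin N) k).submatrix f id) * A *
        ((1 : Matrix (Fin N) (Fin N) k).submatrix id f) := by
    ext a b
    simp [Matrix.mul_apply, Matrix.one_apply, Finset.sum_ite_eq]
  rw [h1]
  exact le_trans (Matrix.rank_mul_le_left _ _) (Matrix.rank_mul_le_right _ _)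

set_option maxRecDepth 8000 in
/-- Determinant of the `6 × 6` tridiagonal matrix with zero diagonal and
off-diagonal entries `l, m, l, m, l`. -/
lemma det_hexa {k : Type*} [Field k] (l m : k) :
    (!![(0:k),l,0,0,0,0; l,0,m,0,0,0; 0,m,0,l,0,0;
        0,0,l,0,m,0; 0,0,0,m,0,l; 0,0,0,0,l,0]).det = -(l*l*l)^2 := by
  simp [Matrix.det_succ_row_zero, Fin.sum_univ_succ, Fin.succAbove]
  ring

set_option maxHeartbeats 1000000 in
/-- Over an algebraically closed field of characteristic `≠ 2`, the
matrices above represent the quadratic forms `Ω₁`, `Ω₂` (via `x ⬝ B x = 2·Ω(x)`), and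
every nonzero form `λΩ₁ + μΩ₂` in the pencil has rank exactly `6`. -/
theorem stmt_1 {k : Type*} [Field k] [IsAlgClosed k] (h2 : (2 : k) ≠ 0) :
    (∀ x : Fin 7 → k,
        x ⬝ᵥ (gramOmega1 k).mulVec x = 2 * (x 0 * x 1 + x 2 * x 3 + x 4 * x 5) ∧
        x ⬝ᵥ (gramOmega2 k).mulVec x = 2 * (x 1 * x 2 + x 3 * x 4 + x 5 * x 6)) ∧
    ∀ l m : k, ¬(l = 0 ∧ m = 0) →
      (l • gramOmega1 k + m • gramOmega2 k).rank = 6 := by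
  constructor
  · intro x
    constructor
    · simp [gramOmega1, dotProduct, Matrix.mulVec, Fin.sum_univ_seven]
      ring
    · simp [gramOmega2, dotProduct, Matrix.mulVec, Fin.sum_univ_seven]
      ring
  · intro l m hlm
    have hM : l • gramOmega1 k + m • gramOmega2 k =
        !![0,l,0,0,0,0,0; l,0,m,0,0,0,0; 0,m,0,l,0,0,0; 0,0,l,0,m,0,0;
           0,0,0,m,0,l,0; 0,0,0,0,l,0,m; 0,0,0,0,0,m,0] := by
      rw [gramOmega1, gramOmega2]
      norm_num [Matrix.smul_of, Matrix.smul_cons, Matrix.smul_empty,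
        Matrix.cons_add_cons, Matrix.empty_add_empty, smul_eq_mul]
    rw [hM]
    set M : Matrix (Fin 7) (Fin 7) k :=
      !![0,l,0,0,0,0,0; l,0,m,0,0,0,0; 0,m,0,l,0,0,0; 0,0,l,0,m,0,0;
         0,0,0,m,0,l,0; 0,0,0,0,l,0,m; 0,0,0,0,0,m,0] with hMdef
    -- Upper bound: the kernel is nontrivial
    have hle : M.rank ≤ 6 := by
      have hker : M.mulVec ![m^3, 0, -(l*m^2), 0, l^2*m, 0, -(l^3)] = 0 := by
        funext i
        fin_cases i <;> (simp [hMdef, Matrix.mulVec, dotProduct, Fin.sum_univ_seven]; try ring)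
      have hvne : (![m^3, 0, -(l*m^2), 0, l^2*m, 0, -(l^3)] : Fin 7 → k) ≠ 0 := by
        intro h
        rcases not_and_or.mp hlm with hl | hm
        · have h6 := congrFun h 6
          simp at h6
          exact hl h6
        · have h0 := congrFun h 0
          simp at h0
          exact hm h0
      have hrn : M.rank + Module.finrank k (LinearMap.ker M.mulVecLin) = 7 := by
        have := LinearMap.finrank_range_add_finrank_ker M.mulVecLin
        simpa [Matrix.rank] using this
      have hker1 : 1 ≤ Module.finrank k (LinearMap.ker M.mulVecLin) := by
        have hnt : Nontrivial (LinearMap.ker M.mulVecLin) := by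
          refine nontrivial_of_ne ⟨![m^3, 0, -(l*m^2), 0, l^2*m, 0, -(l^3)], ?_⟩ 0 ?_
          · simpa [Matrix.mulVecLin] using hker
          · intro h
            exact hvne (by simpa using congrArg Subtype.val h)
        exact Module.finrank_pos_iff.mpr hnt
      omega
    -- Lower bound: a 6×6 invertible principal submatrix
    have hge : 6 ≤ M.rank := by
      have hc : (6 : ℕ) ≤ 7 := by norm_num
      rcases not_and_or.mp hlm with hl | hm
      · -- l ≠ 0 : leading principal 6×6 minor
        have hS : M.submatrix (Fin.castLE hc : Fin 6 → Fin 7)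
              (Fin.castLE hc) =
            !![(0:k),l,0,0,0,0; l,0,m,0,0,0; 0,m,0,l,0,0;
               0,0,l,0,m,0; 0,0,0,m,0,l; 0,0,0,0,l,0] := by
          ext a b
          fin_cases a <;> fin_cases b <;> rfl
        have hdet : (M.submatrix (Fin.castLE hc : Fin 6 → Fin 7)
            (Fin.castLE hc)).det ≠ 0 := by
          rw [hS, det_hexa]
          exact neg_ne_zero.mpr (pow_ne_zero _ (mul_ne_zero (mul_ne_zero hl hl) hl))
        have hrk : (M.submatrix (Fin.castLE hc : Fin 6 → Fin 7)
            (Fin.castLE hc)).rank = 6 := by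
          have := Matrix.rank_of_isUnit _
            ((Matrix.isUnit_iff_isUnit_det _).mpr (isUnit_iff_ne_zero.mpr hdet))
          simpa using this
        calc (6 : ℕ) = _ := hrk.symm
          _ ≤ M.rank := rank_submatrix_le' M _
      · -- m ≠ 0 : trailing principal 6×6 minor
        have hS : M.submatrix (Fin.succ : Fin 6 → Fin 7) Fin.succ =
            !![(0:k),m,0,0,0,0; m,0,l,0,0,0; 0,l,0,m,0,0;
               0,0,m,0,l,0; 0,0,0,l,0,m; 0,0,0,0,m,0] := by
          ext a b
          fin_cases a <;> fin_cases b <;> rfl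
        have hdet : (M.submatrix (Fin.succ : Fin 6 → Fin 7) Fin.succ).det ≠ 0 := by
          rw [hS, det_hexa]
          exact neg_ne_zero.mpr (pow_ne_zero _ (mul_ne_zero (mul_ne_zero hm hm) hm))
        have hrk : (M.submatrix (Fin.succ : Fin 6 → Fin 7) Fin.succ).rank = 6 := by
          have := Matrix.rank_of_isUnit _
            ((Matrix.isUnit_iff_isUnit_det _).mpr (isUnit_iff_ne_zero.mpr hdet))
          simpa using this
        calc (6 : ℕ) = _ := hrk.symm
          _ ≤ M.rank := rank_submatrix_le' M _
    omega
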